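/- Up to homothety there is a unique symmetric curve parallel to a convex curve γ: if a symmetric curve u (u(θ+π) = -u(θ)) has tangent directions parallel to those of γ at each θ, and γ = M + c(θ)u with M the area evolute (midpoint curve) of γ, then c(θ) is constant; consequently u is homothetic to u(γ)(θ) = ½(γ(θ) - γ(θ+π)). -/

import Mathlib

open Real

/-- Determinant of two plane vectors. -/
noncomputable def det2 (w₁ w₂ : ℝ × ℝ) : ℝ := w₁.1 * w₂.2 - w₁.2 * w₂.1

/-- Up to homothety, the only symmetric curve parallel to a convex curve γ is
u(γ)(θ) = ½(γ(θ) - γ(θ+π)): if γ = M + c(θ)u with u symmetric and parallel to γ,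
then c is constant and u is homothetic to u(γ). -/
theorem unique_symmetric_parallel (γ γ' u u' : ℝ → ℝ × ℝ) (lam c c' : ℝ → ℝ)
    (hγ : ∀ θ, HasDerivAt γ (γ' θ) θ)
    (hγ' : ∀ θ, γ' θ = lam θ • (-Real.sin θ, Real.cos θ))
    (hlam : ∀ θ, 0 < lam θ)
    (hγper : ∀ θ, γ (θ + 2 * π) = γ θ)
    (hu : ∀ θ, HasDerivAt u (u' θ) θ)
    (husym : ∀ θ, u (θ + π) = -u θ)
    (hudet : ∀ θ, 0 < det2 (u θ) (u' θ))
    (hpar : ∀ θ, ∃ t : ℝ, u' θ = t • γ' θ)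
    (hc : ∀ θ, HasDerivAt c (c' θ) θ)
    (hdecomp : ∀ θ, γ θ = (1/2 : ℝ) • (γ θ + γ (θ + π)) + c θ • u θ) :
    (∀ θ₁ θ₂, c θ₁ = c θ₂) ∧
    ∃ r : ℝ, ∀ θ, u θ = r • ((1/2 : ℝ) • (γ θ - γ (θ + π))) := by
  have hv : ∀ θ, c θ • u θ = (1/2 : ℝ) • (γ θ - γ (θ + π)) := by
    intro θ
    have h := hdecomp θ
    linear_combination (norm := module) -h
  have hγπ : ∀ θ : ℝ, HasDerivAt (fun s => γ (s + π)) (γ' (θ + π)) θ := fun θ =>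
    (hγ (θ + π)).comp_add_const θ π
  have hkey : ∀ θ, c θ • u' θ + c' θ • u θ = (1/2 : ℝ) • (γ' θ - γ' (θ + π)) := by
    intro θ
    have h1 : HasDerivAt (fun s => c s • u s) (c θ • u' θ + c' θ • u θ) θ :=
      (hc θ).smul (hu θ)
    have h2 : HasDerivAt (fun s => (1/2 : ℝ) • (γ s - γ (s + π)))
        ((1/2 : ℝ) • (γ' θ - γ' (θ + π))) θ := (by have := ((hγ θ).sub (hγπ θ)).const_smul (1/2 : ℝ); exact this)
    have hfe : (fun s => c s • u s) = fun s => (1/2 : ℝ) • (γ s - γ (s + π)) :=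
      funext hv
    rw [hfe] at h1
    exact h1.unique h2
  have hc0 : ∀ θ, c' θ = 0 := by
    intro θ
    obtain ⟨t, ht⟩ := hpar θ
    have he : γ' (θ + π) = (-(lam (θ + π))) • (-Real.sin θ, Real.cos θ) := by
      rw [hγ' (θ + π)]
      simp [Real.sin_add_pi, Real.cos_add_pi, Prod.ext_iff, Prod.smul_def]
    have hk := hkey θ
    rw [ht, hγ' θ, he] at hk
    have hk1 := congrArg Prod.fst hk
    have hk2 := congrArg Prod.snd hk
    simp [Prod.smul_def] at hk1 hk2
    have hd := hudet θ
    rw [ht, hγ' θ] at hd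
    simp [det2, Prod.smul_def] at hd
    have h3 : c' θ * ((u θ).1 * Real.cos θ + (u θ).2 * Real.sin θ) = 0 := by
      linear_combination Real.cos θ * hk1 + Real.sin θ * hk2
    rcases mul_eq_zero.mp h3 with h | h
    · exact h
    · exfalso
      have hfac : (u θ).1 * (t * (lam θ * Real.cos θ)) + (u θ).2 * (t * (lam θ * Real.sin θ))
          = t * lam θ * ((u θ).1 * Real.cos θ + (u θ).2 * Real.sin θ) := by ring
      rw [hfac, h, mul_zero] at hd
      exact lt_irrefl 0 hd
  have hconst : ∀ θ₁ θ₂, c θ₁ = c θ₂ := by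
    have hdiff : Differentiable ℝ c := fun θ => (hc θ).differentiableAt
    have hdz : ∀ θ, deriv c θ = 0 := fun θ => by rw [(hc θ).deriv]; exact hc0 θ
    exact fun θ₁ θ₂ => is_const_of_deriv_eq_zero hdiff hdz θ₁ θ₂
  refine ⟨hconst, ?_⟩
  have hc0ne : c 0 ≠ 0 := by
    intro h0
    have hγeq : ∀ θ, γ θ = γ (θ + π) := by
      intro θ
      have hz : (1/2 : ℝ) • (γ θ - γ (θ + π)) = 0 := by
        rw [← hv θ, hconst θ 0, h0, zero_smul]
      have h2 : γ θ - γ (θ + π) = 0 :=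
        (smul_eq_zero.mp hz).resolve_left (by norm_num)
      exact sub_eq_zero.mp h2
    have hde : γ' 0 = γ' π := by
      have h1 : HasDerivAt (fun s => γ (s + π)) (γ' 0) 0 := by
        have := hγ 0
        rwa [funext hγeq] at this
      have := h1.unique (hγπ 0)
      simpa using this
    rw [hγ' 0, hγ' π] at hde
    have := congrArg Prod.snd hde
    simp [Prod.smul_def] at this
    nlinarith [hlam 0, hlam π, this]
  refine ⟨(c 0)⁻¹, fun θ => ?_⟩
  rw [← hv θ, hconst θ 0, inv_smul_smul₀ hc0ne]
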